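/- arXiv:2206.10010 — 6 statements merged into one kernel-verified Lean document; each statement's English description precedes it below -/
import Mathlib

section
/- For a connected graph G, given φ ∈ ℝ^m with positive entries, the supremum of ||X||_F² over all X ∈ ℝ^{n×d} satisfying X^t 1 = 0 and ||X^t b_k||² ≤ φ_k for all edges k is attained; i.e., the maximal graph realization problem has a maximizer. -/
open Finset Real

/-- The relaxed maximal graph realization problem attains its supremum. -/
theorem stmt_3 (n m d : ℕ)
    (E : Fin m → Fin n × Fin n) (hE : ∀ k, (E k).1 ≠ (E k).2)
    (hconn : (SimpleGraph.fromRel (fun i j => ∃ k, E k = (i, j))).Connected)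
    (b : Fin m → Fin n → ℝ)
    (hb : ∀ k l, b k l = if l = (E k).1 then 1 else if l = (E k).2 then -1 else 0)
    (φ : Fin m → ℝ) (hφ : ∀ k, 0 < φ k) :
    ∃ X : Fin n → Fin d → ℝ,
      (∀ l, ∑ i, X i l = 0) ∧ (∀ k, ∑ l, (∑ i, b k i * X i l) ^ 2 ≤ φ k) ∧
      ∀ Y : Fin n → Fin d → ℝ,
        (∀ l, ∑ i, Y i l = 0) → (∀ k, ∑ l, (∑ i, b k i * Y i l) ^ 2 ≤ φ k) →
        ∑ i, ∑ l, Y i l ^ 2 ≤ ∑ i, ∑ l, X i l ^ 2 := by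
  classical
  set G := SimpleGraph.fromRel (fun i j : Fin n => ∃ k, E k = (i, j)) with hG
  set Φ : ℝ := ∑ k, φ k with hΦdef
  have hΦ0 : 0 ≤ Φ := Finset.sum_nonneg fun k _ => (hφ k).le
  have hφΦ : ∀ k, φ k ≤ Φ := fun k =>
    Finset.single_le_sum (f := φ) (fun k _ => (hφ k).le) (mem_univ k)
  set S : Set (Fin n → Fin d → ℝ) :=
    {Y | (∀ l, ∑ i, Y i l = 0) ∧ ∀ k, ∑ l, (∑ i, b k i * Y i l) ^ 2 ≤ φ k} with hSdef
  have h0S : (0 : Fin n → Fin d → ℝ) ∈ S := by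
    constructor
    · intro l; simp
    · intro k; simpa using (hφ k).le
  have hedge : ∀ (Y : Fin n → Fin d → ℝ) k l,
      ∑ i, b k i * Y i l = Y (E k).1 l - Y (E k).2 l := by
    intro Y k l
    have hne := hE k
    have key : ∀ i : Fin n, b k i * Y i l =
        (if i = (E k).1 then Y i l else 0) - (if i = (E k).2 then Y i l else 0) := by
      intro i
      rw [hb]
      by_cases h1 : i = (E k).1 <;> by_cases h2 : i = (E k).2
      · exact absurd (h1.symm.trans h2) hne
      · simp [h1, h2, hne]
      · simp [h1, h2, Ne.symm hne]
      · simp [h1, h2]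
    rw [Finset.sum_congr rfl fun i _ => key i, Finset.sum_sub_distrib]
    simp
  have core : ∀ Y ∈ S, ∀ (l : Fin d) (k : Fin m) i j, E k = (i, j) →
      |Y i l - Y j l| ≤ Real.sqrt Φ := by
    intro Y hYS l k i j hk
    have hk1 : (E k).1 = i := by rw [hk]
    have hk2 : (E k).2 = j := by rw [hk]
    have hle : (∑ i', b k i' * Y i' l) ^ 2 ≤ ∑ l', (∑ i', b k i' * Y i' l') ^ 2 :=
      Finset.single_le_sum (f := fun l' => (∑ i', b k i' * Y i' l') ^ 2)
        (fun l' _ => sq_nonneg _) (mem_univ l)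
    rw [hedge Y k l, hk1, hk2] at hle
    have h1 : (Y i l - Y j l) ^ 2 ≤ φ k := hle.trans (hYS.2 k)
    calc |Y i l - Y j l| = Real.sqrt ((Y i l - Y j l) ^ 2) := (Real.sqrt_sq_eq_abs _).symm
      _ ≤ Real.sqrt Φ := Real.sqrt_le_sqrt (h1.trans (hφΦ k))
  have hadj : ∀ Y ∈ S, ∀ (l : Fin d) i j, G.Adj i j → |Y i l - Y j l| ≤ Real.sqrt Φ := by
    intro Y hYS l i j hij
    rw [hG, SimpleGraph.fromRel_adj] at hij
    obtain ⟨hne, ⟨k, hk⟩ | ⟨k, hk⟩⟩ := hij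
    · exact core Y hYS l k i j hk
    · rw [abs_sub_comm]
      exact core Y hYS l k j i hk
  have hwalk : ∀ Y ∈ S, ∀ (l : Fin d) (i j : Fin n) (p : G.Walk i j),
      |Y i l - Y j l| ≤ p.length * Real.sqrt Φ := by
    intro Y hYS l i j p
    induction p with
    | nil => simp
    | @cons a v c h q ih =>
      have h1 := hadj Y hYS l a v h
      calc |Y a l - Y c l| ≤ |Y a l - Y v l| + |Y v l - Y c l| := abs_sub_le _ _ _
        _ ≤ Real.sqrt Φ + q.length * Real.sqrt Φ := add_le_add h1 ih
        _ = (SimpleGraph.Walk.cons h q).length * Real.sqrt Φ := by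
            rw [SimpleGraph.Walk.length_cons]; push_cast; ring
  have hpair : ∀ Y ∈ S, ∀ (l : Fin d) i j, |Y i l - Y j l| ≤ n * Real.sqrt Φ := by
    intro Y hYS l i j
    obtain ⟨w⟩ := hconn.preconnected i j
    have hlen : (w.toPath : G.Walk i j).length < n := by
      have := SimpleGraph.Walk.IsPath.length_lt (w.toPath.2)
      simpa using this
    calc |Y i l - Y j l| ≤ (w.toPath : G.Walk i j).length * Real.sqrt Φ :=
          hwalk Y hYS l i j _
      _ ≤ n * Real.sqrt Φ :=
          mul_le_mul_of_nonneg_right (by exact_mod_cast hlen.le) (Real.sqrt_nonneg _)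
  have hbd : ∀ Y ∈ S, ∀ i l, |Y i l| ≤ n * Real.sqrt Φ := by
    intro Y hYS i l
    have hn : 0 < (n : ℝ) := by exact_mod_cast i.pos
    have hsum : ∑ j, (Y i l - Y j l) = n * Y i l := by
      rw [Finset.sum_sub_distrib, hYS.1 l, Finset.sum_const, card_univ, Fintype.card_fin]
      simp [nsmul_eq_mul]
    have hmul : (n : ℝ) * |Y i l| ≤ n * (n * Real.sqrt Φ) := by
      calc (n : ℝ) * |Y i l| = |∑ j, (Y i l - Y j l)| := by
            rw [hsum, abs_mul, Nat.abs_cast]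
        _ ≤ ∑ j : Fin n, |Y i l - Y j l| := Finset.abs_sum_le_sum_abs _ _
        _ ≤ ∑ _j : Fin n, ((n : ℝ) * Real.sqrt Φ) :=
            Finset.sum_le_sum fun j _ => hpair Y hYS l i j
        _ = n * (n * Real.sqrt Φ) := by
            rw [Finset.sum_const, card_univ, Fintype.card_fin]; simp [nsmul_eq_mul]
    exact le_of_mul_le_mul_left hmul hn
  have hbdd : Bornology.IsBounded S := by
    rw [isBounded_iff_forall_norm_le]
    refine ⟨n * Real.sqrt Φ, fun Y hY => ?_⟩
    rw [pi_norm_le_iff_of_nonneg (by positivity)]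
    intro i
    rw [pi_norm_le_iff_of_nonneg (by positivity)]
    intro l
    rw [Real.norm_eq_abs]
    exact hbd Y hY i l
  have hcl : IsClosed S := by
    have h1 : IsClosed {Y : Fin n → Fin d → ℝ | ∀ l, ∑ i, Y i l = 0} := by
      have he : {Y : Fin n → Fin d → ℝ | ∀ l, ∑ i, Y i l = 0}
          = ⋂ l, {Y | ∑ i, Y i l = 0} := by ext Y; simp
      rw [he]
      exact isClosed_iInter fun l => isClosed_eq (by fun_prop) continuous_const
    have h2 : IsClosed {Y : Fin n → Fin d → ℝ | ∀ k, ∑ l, (∑ i, b k i * Y i l) ^ 2 ≤ φ k} := by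
      have he : {Y : Fin n → Fin d → ℝ | ∀ k, ∑ l, (∑ i, b k i * Y i l) ^ 2 ≤ φ k}
          = ⋂ k, {Y | ∑ l, (∑ i, b k i * Y i l) ^ 2 ≤ φ k} := by ext Y; simp
      rw [he]
      exact isClosed_iInter fun k => isClosed_le (by fun_prop) continuous_const
    have he : S = {Y : Fin n → Fin d → ℝ | ∀ l, ∑ i, Y i l = 0}
        ∩ {Y | ∀ k, ∑ l, (∑ i, b k i * Y i l) ^ 2 ≤ φ k} := rfl
    rw [he]
    exact h1.inter h2
  have hcpt : IsCompact S := Metric.isCompact_of_isClosed_isBounded hcl hbdd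
  have hcont : Continuous fun Y : Fin n → Fin d → ℝ => ∑ i, ∑ l, Y i l ^ 2 := by fun_prop
  obtain ⟨X, hXS, hmax⟩ := hcpt.exists_isMaxOn ⟨0, h0S⟩ hcont.continuousOn
  exact ⟨X, hXS.1, hXS.2, fun Y hY1 hY2 => isMaxOn_iff.mp hmax Y ⟨hY1, hY2⟩⟩
end

section
/- The constraint set of the relaxed maximal realization problem, {X ∈ ℝ^{n×d} : X^t 1 = 0 and ||X^t b_k||² ≤ φ_k for all k ∈ [m]}, is a compact subset of ℝ^{n×d} when G is connected. -/
open Finset Real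

lemma walk_bound {n : ℕ} (G : SimpleGraph (Fin n)) (f : Fin n → ℝ) (B : ℝ)
    (hadj : ∀ a b, G.Adj a b → |f a - f b| ≤ B) :
    ∀ {i j : Fin n} (w : G.Walk i j), |f i - f j| ≤ w.length * B := by
  intro i j w
  induction w with
  | nil => simp
  | @cons i c j h p ih =>
      have h1 := hadj i c h
      calc |f i - f j| ≤ |f i - f c| + |f c - f j| := abs_sub_le _ _ _
        _ ≤ B + p.length * B := add_le_add h1 ih
        _ = (SimpleGraph.Walk.cons h p).length * B := by
            simp [SimpleGraph.Walk.length_cons]; ring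

/-- The constraint set of the relaxed maximal realization problem is compact
when the graph is connected. -/
theorem stmt_4 (n m d : ℕ)
    (E : Fin m → Fin n × Fin n) (hE : ∀ k, (E k).1 ≠ (E k).2)
    (hconn : (SimpleGraph.fromRel (fun i j => ∃ k, E k = (i, j))).Connected)
    (b : Fin m → Fin n → ℝ)
    (hb : ∀ k l, b k l = if l = (E k).1 then 1 else if l = (E k).2 then -1 else 0)
    (φ : Fin m → ℝ) (hφ : ∀ k, 0 < φ k) :
    IsCompact {X : Fin n → Fin d → ℝ |
      (∀ l, ∑ i, X i l = 0) ∧ ∀ k, ∑ l, (∑ i, b k i * X i l) ^ 2 ≤ φ k} := by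
  classical
  set G := SimpleGraph.fromRel (fun i j : Fin n => ∃ k, E k = (i, j)) with hG
  set B : ℝ := ∑ k, Real.sqrt (φ k) with hB
  have hB0 : 0 ≤ B := Finset.sum_nonneg fun k _ => Real.sqrt_nonneg _
  set K : ℕ := Finset.univ.sup
    (fun p : Fin n × Fin n => ((hconn.preconnected p.1 p.2).some).length) with hK
  set R : ℝ := K * B with hR
  -- key per-edge bound
  have key : ∀ X ∈ {X : Fin n → Fin d → ℝ |
      (∀ l, ∑ i, X i l = 0) ∧ ∀ k, ∑ l, (∑ i, b k i * X i l) ^ 2 ≤ φ k},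
      ∀ i l, |X i l| ≤ R := by
    rintro X ⟨hsum, hineq⟩ i l
    set f : Fin n → ℝ := fun i => X i l with hf
    have hedge : ∀ k, |f (E k).1 - f (E k).2| ≤ Real.sqrt (φ k) := by
      intro k
      have hs : ∑ i, b k i * X i l = f (E k).1 - f (E k).2 := by
        have h1 : ∀ i, b k i * X i l =
            (if i = (E k).1 then X (E k).1 l else 0)
            - (if i = (E k).2 then X (E k).2 l else 0) := by
          intro i
          rw [hb]
          by_cases h1 : i = (E k).1
          · subst h1; simp [hE k]
          · by_cases h2 : i = (E k).2
            · subst h2; simp [h1]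
            · simp [h1, h2]
        rw [Finset.sum_congr rfl (fun i _ => h1 i), Finset.sum_sub_distrib]
        simp [hf]
      have hsq : (f (E k).1 - f (E k).2) ^ 2 ≤ φ k := by
        calc (f (E k).1 - f (E k).2) ^ 2
            = (∑ i, b k i * X i l) ^ 2 := by rw [hs]
          _ ≤ ∑ l', (∑ i, b k i * X i l') ^ 2 :=
              Finset.single_le_sum (f := fun l' => (∑ i, b k i * X i l') ^ 2)
                (fun l' _ => sq_nonneg _) (Finset.mem_univ l)
          _ ≤ φ k := hineq k
      calc |f (E k).1 - f (E k).2| = Real.sqrt ((f (E k).1 - f (E k).2) ^ 2) :=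
            (Real.sqrt_sq_eq_abs _).symm
        _ ≤ Real.sqrt (φ k) := Real.sqrt_le_sqrt hsq
    have hadj : ∀ a c, G.Adj a c → |f a - f c| ≤ B := by
      intro a c hac
      rw [hG, SimpleGraph.fromRel_adj] at hac
      obtain ⟨hne, hrel | hrel⟩ := hac
      · obtain ⟨k, hk⟩ := hrel
        have := hedge k
        rw [hk] at this
        exact this.trans (Finset.single_le_sum (fun k' _ => Real.sqrt_nonneg _)
          (Finset.mem_univ k))
      · obtain ⟨k, hk⟩ := hrel
        have := hedge k
        rw [hk] at this
        rw [abs_sub_comm] at this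
        exact this.trans (Finset.single_le_sum (fun k' _ => Real.sqrt_nonneg _)
          (Finset.mem_univ k))
    have hpair : ∀ j : Fin n, |f i - f j| ≤ R := by
      intro j
      have hw := walk_bound G f B hadj ((hconn.preconnected i j).some)
      refine hw.trans ?_
      rw [hR]
      have hKle : ((hconn.preconnected i j).some).length ≤ K :=
        Finset.le_sup (f := fun p : Fin n × Fin n =>
          ((hconn.preconnected p.1 p.2).some).length) (Finset.mem_univ (i, j))
      exact mul_le_mul_of_nonneg_right (by exact_mod_cast hKle) hB0
    have hsum0 : ∑ j, (f i - f j) = n * f i := by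
      rw [Finset.sum_sub_distrib]
      simp [hf, hsum l, Finset.sum_const, mul_comm]
    have hn : (0 : ℝ) < n := by exact_mod_cast i.pos
    have : (n : ℝ) * |f i| ≤ n * R := by
      calc (n : ℝ) * |f i| = |(n : ℝ) * f i| := by
            rw [abs_mul, abs_of_nonneg hn.le]
        _ = |∑ j, (f i - f j)| := by rw [hsum0]
        _ ≤ ∑ j, |f i - f j| := Finset.abs_sum_le_sum_abs _ _
        _ ≤ ∑ _j : Fin n, R := Finset.sum_le_sum fun j _ => hpair j
        _ = n * R := by simp [mul_comm]
    exact le_of_mul_le_mul_left this hn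
  apply IsCompact.of_isClosed_subset
    (isCompact_univ_pi fun _ : Fin n => isCompact_univ_pi fun _ : Fin d =>
      isCompact_Icc (a := -R) (b := R))
  · have hset : {X : Fin n → Fin d → ℝ |
        (∀ l, ∑ i, X i l = 0) ∧ ∀ k, ∑ l, (∑ i, b k i * X i l) ^ 2 ≤ φ k}
        = (⋂ l, {X : Fin n → Fin d → ℝ | ∑ i, X i l = 0})
          ∩ ⋂ k, {X : Fin n → Fin d → ℝ | ∑ l, (∑ i, b k i * X i l) ^ 2 ≤ φ k} := by
      ext X; simp [Set.mem_iInter]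
    rw [hset]
    refine IsClosed.inter (isClosed_iInter fun l => ?_) (isClosed_iInter fun k => ?_)
    · exact isClosed_eq (by fun_prop) continuous_const
    · exact isClosed_le (by fun_prop) continuous_const
  · intro X hX
    refine Set.mem_pi.mpr fun i _ => Set.mem_pi.mpr fun l _ => ?_
    rw [Set.mem_Icc, ← abs_le]
    exact key X hX i l
end

section
/- The centered regular n-gon is a maximal graph realization of the n-cycle: among all maps x : {0,...,n−1} → ℝ² with Σ_j x(j) = 0 and ||x(j+1 mod n) − x(j)||² ≤ 1 for all j, the total variance Σ_j ||x(j)||² is at most (n/4)·csc²(π/n), with equality for the centered regular n-gon with unit edge length. -/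
open Finset Real Complex

noncomputable def ee (n : ℕ) (m : ℤ) : ℂ := Complex.exp (2 * π * Complex.I * m / n)

lemma ee_add (n : ℕ) (a b : ℤ) : ee n (a + b) = ee n a * ee n b := by
  rw [ee, ee, ee, ← Complex.exp_add]; congr 1; push_cast; ring

lemma ee_eq_exp (n : ℕ) (m : ℤ) : ee n m = Complex.exp ((2 * π * m / n : ℝ) * Complex.I) := by
  rw [ee]; congr 1; push_cast; ring

lemma ee_one_of_dvd (n : ℕ) (hn : 0 < n) {m : ℤ} (h : (n:ℤ) ∣ m) : ee n m = 1 := by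
  obtain ⟨t, rfl⟩ := h
  rw [ee]
  have hn' : (n:ℂ) ≠ 0 := by exact_mod_cast hn.ne'
  have : 2 * (π:ℂ) * Complex.I * ((n:ℤ) * t : ℤ) / n = t * (2 * π * Complex.I) := by
    push_cast; field_simp
  rw [this, Complex.exp_int_mul_two_pi_mul_I]

lemma ee_eq_one_iff (n : ℕ) (hn : 0 < n) {m : ℤ} : ee n m = 1 ↔ (n:ℤ) ∣ m := by
  constructor
  · intro h
    rw [ee, Complex.exp_eq_one_iff] at h
    obtain ⟨k, hk⟩ := h
    refine ⟨k, ?_⟩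
    have hn' : (n:ℂ) ≠ 0 := by exact_mod_cast hn.ne'
    have hpi : (π:ℂ) ≠ 0 := by exact_mod_cast Real.pi_ne_zero
    have key : (2*π*Complex.I) ≠ 0 := by
      simp [Complex.I_ne_zero, hpi]
    have h2 : (2*π*Complex.I) * (m:ℂ) = (2*π*Complex.I) * ((n:ℂ)*k) := by
      field_simp at hk
      linear_combination (2*π*Complex.I) * hk
    have : (m:ℂ) = (n:ℂ)*k := mul_left_cancel₀ key h2
    exact_mod_cast this
  · exact ee_one_of_dvd n hn

lemma ee_congr (n : ℕ) (hn : 0 < n) {a b : ℤ} (h : (n:ℤ) ∣ (a - b)) : ee n a = ee n b := by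
  have : a = b + (a - b) := by ring
  rw [this, ee_add, ee_one_of_dvd n hn h, mul_one]

lemma ee_pow (n : ℕ) (m : ℤ) (k : ℕ) : ee n (m * k) = (ee n m) ^ k := by
  induction k with
  | zero => simp [ee]
  | succ k ih =>
    have : m * ((k+1 : ℕ) : ℤ) = m * k + m := by push_cast; ring
    rw [this, ee_add, ih, pow_succ]

lemma ee_orth (n : ℕ) (hn : 0 < n) (m : ℤ) :
    ∑ k : Fin n, ee n (m * k) = if (n:ℤ) ∣ m then (n:ℂ) else 0 := by
  have h1 : ∑ k : Fin n, ee n (m * k) = ∑ k : Fin n, (ee n m) ^ (k:ℕ) :=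
    Finset.sum_congr rfl fun k _ => ee_pow n m k
  rw [h1, Fin.sum_univ_eq_sum_range (fun k => (ee n m) ^ k)]
  by_cases h : (n:ℤ) ∣ m
  · simp [h, ee_one_of_dvd n hn h]
  · rw [if_neg h]
    have hne : ee n m ≠ 1 := fun hc => h ((ee_eq_one_iff n hn).1 hc)
    rw [geom_sum_eq hne]
    have : (ee n m) ^ n = 1 := by
      rw [← ee_pow]
      exact ee_one_of_dvd n hn ⟨m, mul_comm m n⟩
    simp [this]

lemma ee_conj (n : ℕ) (m : ℤ) : (starRingEnd ℂ) (ee n m) = ee n (-m) := by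
  rw [ee, ee, ← Complex.exp_conj]
  congr 1
  simp [map_mul, map_div₀, Complex.conj_I, map_ofNat]

lemma fin_dvd_iff (n : ℕ) {j l : Fin n} : (n:ℤ) ∣ ((j:ℤ) - (l:ℤ)) ↔ l = j := by
  constructor
  · intro h
    have h1 := j.isLt
    have h2 := l.isLt
    have : ((j:ℤ) - (l:ℤ)) = 0 := by
      refine Int.eq_zero_of_abs_lt_dvd h ?_
      rw [abs_lt]
      omega
    have : (j:ℤ) = (l:ℤ) := by omega
    exact (Fin.ext (by exact_mod_cast this.symm))
  · rintro rfl; simp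

noncomputable def dftF (n : ℕ) (y : Fin n → ℂ) (k : Fin n) : ℂ :=
  ∑ j, y j * ee n ((j:ℤ) * (k:ℤ))

lemma parseval (n : ℕ) (hn : 0 < n) (y : Fin n → ℂ) :
    ∑ k, Complex.normSq (dftF n y k) = n * ∑ j, Complex.normSq (y j) := by
  have key : ∑ k : Fin n, (Complex.normSq (dftF n y k) : ℂ)
      = (n:ℂ) * ∑ j, (Complex.normSq (y j) : ℂ) := by
    calc ∑ k : Fin n, (Complex.normSq (dftF n y k) : ℂ)
        = ∑ k, dftF n y k * (starRingEnd ℂ) (dftF n y k) := by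
          simp [Complex.mul_conj]
      _ = ∑ k : Fin n, ∑ j : Fin n, ∑ l : Fin n,
            (y j * (starRingEnd ℂ) (y l)) * ee n (((j:ℤ) - (l:ℤ)) * (k:ℤ)) := by
          refine Finset.sum_congr rfl fun k _ => ?_
          rw [dftF, map_sum, Finset.sum_mul_sum]
          refine Finset.sum_congr rfl fun j _ => Finset.sum_congr rfl fun l _ => ?_
          rw [map_mul, ee_conj]
          have : ee n ((j:ℤ) * (k:ℤ)) * ee n (-((l:ℤ) * (k:ℤ)))
              = ee n (((j:ℤ) - (l:ℤ)) * (k:ℤ)) := by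
            rw [← ee_add]; congr 1; ring
          calc y j * ee n ((j:ℤ)*(k:ℤ)) * ((starRingEnd ℂ) (y l) * ee n (-((l:ℤ)*(k:ℤ))))
              = (y j * (starRingEnd ℂ) (y l)) *
                (ee n ((j:ℤ)*(k:ℤ)) * ee n (-((l:ℤ)*(k:ℤ)))) := by ring
            _ = (y j * (starRingEnd ℂ) (y l)) * ee n (((j:ℤ) - (l:ℤ)) * (k:ℤ)) := by rw [this]
      _ = ∑ j : Fin n, ∑ l : Fin n,
            (y j * (starRingEnd ℂ) (y l)) * ∑ k : Fin n, ee n (((j:ℤ) - (l:ℤ)) * (k:ℤ)) := by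
          rw [Finset.sum_comm]
          refine Finset.sum_congr rfl fun j _ => ?_
          rw [Finset.sum_comm]
          exact Finset.sum_congr rfl fun l _ => (Finset.mul_sum _ _ _).symm
      _ = ∑ j : Fin n, ∑ l : Fin n,
            (y j * (starRingEnd ℂ) (y l)) * (if l = j then (n:ℂ) else 0) := by
          refine Finset.sum_congr rfl fun j _ => Finset.sum_congr rfl fun l _ => ?_
          rw [ee_orth n hn]
          congr 1
          simp [fin_dvd_iff]
      _ = ∑ j : Fin n, (y j * (starRingEnd ℂ) (y j)) * (n:ℂ) := by
          refine Finset.sum_congr rfl fun j _ => ?_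
          simp
      _ = (n:ℂ) * ∑ j, (Complex.normSq (y j) : ℂ) := by
          simp [Complex.mul_conj, Finset.mul_sum]
          exact Finset.sum_congr rfl fun j _ => by ring
  have := key
  push_cast at this
  exact_mod_cast this

lemma fin_add_one_int (n : ℕ) [NeZero n] (j : Fin n) :
    (n:ℤ) ∣ (((j + 1 : Fin n) : ℤ) - ((j:ℤ) + 1)) := by
  have h1 : ((j + 1 : Fin n) : ℕ) = (j.val + 1) % n := by
    rw [Fin.val_add, Fin.val_one']
    have hn0 : 0 < n := Nat.pos_of_ne_zero (NeZero.ne n)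
    rcases Nat.lt_or_ge 1 n with h | h
    · rw [Nat.mod_eq_of_lt h]
    · have hn1 : n = 1 := by omega
      subst hn1
      simp
  have h2 : (((j + 1 : Fin n)) : ℤ) = ((j:ℤ) + 1) % n := by
    rw [h1, Int.natCast_mod]
    push_cast
    rfl
  rw [h2]
  exact ⟨-(((j:ℤ)+1)/n), by rw [Int.emod_def]; ring⟩

lemma dftF_shift (n : ℕ) [NeZero n] (y : Fin n → ℂ) (k : Fin n) :
    dftF n (fun j => y (j + 1)) k = ee n (-(k:ℤ)) * dftF n y k := by
  have hn0 : 0 < n := Nat.pos_of_ne_zero (NeZero.ne n)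
  rw [dftF, dftF, Finset.mul_sum]
  refine Fintype.sum_equiv (Equiv.addRight (1 : Fin n))
    (fun j => y (j+1) * ee n ((j:ℤ) * (k:ℤ)))
    (fun i => ee n (-(k:ℤ)) * (y i * ee n ((i:ℤ) * (k:ℤ)))) (fun j => ?_)
  simp only [Equiv.coe_addRight]
  have key : ee n (-(k:ℤ)) * ee n (((j+1:Fin n):ℤ) * (k:ℤ)) = ee n ((j:ℤ) * (k:ℤ)) := by
    rw [← ee_add]
    refine ee_congr n hn0 ?_
    have h := fin_add_one_int n j
    have e1 : -(k:ℤ) + ((j+1:Fin n):ℤ) * k - (j:ℤ) * k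
        = ((((j + 1 : Fin n)):ℤ) - ((j:ℤ) + 1)) * k := by ring
    rw [e1]
    exact Dvd.dvd.mul_right h _
  calc y (j+1) * ee n ((j:ℤ) * (k:ℤ))
      = y (j+1) * (ee n (-(k:ℤ)) * ee n (((j+1:Fin n):ℤ) * (k:ℤ))) := by rw [key]
    _ = ee n (-(k:ℤ)) * (y (j+1) * ee n (((j+1:Fin n):ℤ) * (k:ℤ))) := by ring

lemma dftF_diff (n : ℕ) [NeZero n] (y : Fin n → ℂ) (k : Fin n) :
    dftF n (fun j => y (j + 1) - y j) k = (ee n (-(k:ℤ)) - 1) * dftF n y k := by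
  have h : dftF n (fun j => y (j + 1) - y j) k
      = dftF n (fun j => y (j + 1)) k - dftF n y k := by
    rw [dftF, dftF, dftF, ← Finset.sum_sub_distrib]
    exact Finset.sum_congr rfl fun j _ => by ring
  rw [h, dftF_shift n y k, sub_mul, one_mul]

lemma normSq_ee_sub_one (n : ℕ) (m : ℤ) :
    Complex.normSq (ee n m - 1) = 4 * Real.sin (π * m / n) ^ 2 := by
  rw [ee_eq_exp, Complex.normSq_apply]
  simp only [Complex.sub_re, Complex.sub_im, Complex.one_re, Complex.one_im,
    Complex.exp_ofReal_mul_I_re, Complex.exp_ofReal_mul_I_im]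
  have h1 : Real.sin (π * m / n) ^ 2 = 1/2 - Real.cos (2 * (π * m / n))/2 :=
    Real.sin_sq_eq_half_sub _
  have h2 : 2 * (π * (m:ℝ) / n) = 2 * π * m / n := by ring
  rw [h2] at h1
  nlinarith [Real.sin_sq_add_cos_sq (2 * π * (m:ℝ) / n)]

lemma sin_min (a x : ℝ) (ha : 0 ≤ a) (h1 : a ≤ x) (h2 : x ≤ π - a) :
    Real.sin a ≤ Real.sin x := by
  have hpi := Real.pi_pos
  have hax : a ≤ π / 2 := by linarith
  have hma : -(π/2) ≤ a := by linarith
  rcases le_total x (π / 2) with h | h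
  · exact Real.strictMonoOn_sin.monotoneOn (Set.mem_Icc.mpr ⟨hma, hax⟩)
      (Set.mem_Icc.mpr ⟨by linarith, h⟩) h1
  · rw [← Real.sin_pi_sub x]
    exact Real.strictMonoOn_sin.monotoneOn (Set.mem_Icc.mpr ⟨hma, hax⟩)
      (Set.mem_Icc.mpr ⟨by linarith, by linarith⟩) (by linarith)

lemma poincare (n : ℕ) [NeZero n] (hn : 2 ≤ n) (y : Fin n → ℂ) (h0 : ∑ j, y j = 0) :
    4 * Real.sin (π / n) ^ 2 * ∑ j, Complex.normSq (y j)
      ≤ ∑ j, Complex.normSq (y (j + 1) - y j) := by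
  have hn0 : 0 < n := by omega
  have hpi := Real.pi_pos
  have hP1 := parseval n hn0 y
  have hP2 := parseval n hn0 (fun j => y (j + 1) - y j)
  have hF0 : dftF n y 0 = 0 := by
    rw [dftF]
    have : ∀ j : Fin n, y j * ee n ((j:ℤ) * ((0 : Fin n):ℤ)) = y j := by
      intro j
      simp [ee]
    rw [Finset.sum_congr rfl fun j _ => this j]
    exact h0
  have hfac : ∀ k : Fin n, Complex.normSq (dftF n (fun j => y (j + 1) - y j) k)
      = 4 * Real.sin (π * (k:ℤ) / n) ^ 2 * Complex.normSq (dftF n y k) := by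
    intro k
    rw [dftF_diff n y k, Complex.normSq_mul, normSq_ee_sub_one]
    push_cast
    have h3 : π * (-((k:ℕ):ℝ)) / n = -(π * (((k:ℕ)):ℝ) / n) := by ring
    rw [h3, Real.sin_neg]
    ring
  have hterm : ∀ k : Fin n, 4 * Real.sin (π / n) ^ 2 * Complex.normSq (dftF n y k)
      ≤ 4 * Real.sin (π * (k:ℤ) / n) ^ 2 * Complex.normSq (dftF n y k) := by
    intro k
    by_cases hk : k = 0
    · subst hk; rw [hF0]; simp
    · have hk1 : 1 ≤ (k:ℕ) := by
        rcases Nat.eq_zero_or_pos (k:ℕ) with h | h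
        · exact absurd (Fin.ext (by simp [h])) hk
        · exact h
      have hk2 : (k:ℕ) ≤ n - 1 := by omega
      have hk2' : ((k:ℕ):ℝ) ≤ (n:ℝ) - 1 := by
        have : ((k:ℕ):ℝ) ≤ ((n - 1 : ℕ):ℝ) := by exact_mod_cast hk2
        have hcast : ((n - 1 : ℕ):ℝ) = (n:ℝ) - 1 := by
          push_cast [Nat.cast_sub (by omega : 1 ≤ n)]
          ring
        linarith [hcast ▸ this]
      have hkR : (1:ℝ) ≤ ((k:ℕ):ℝ) := by exact_mod_cast hk1
      have hnR0 : (0:ℝ) < (n:ℝ) := by exact_mod_cast hn0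
      have hs : Real.sin (π / n) ≤ Real.sin (π * (k:ℤ) / n) := by
        apply sin_min
        · positivity
        · push_cast
          calc π / (n:ℝ) = π * 1 / n := by ring
            _ ≤ π * ((k:ℕ):ℝ) / n := by gcongr
        · push_cast
          have h2 : π * ((n:ℝ) - 1) / n = π - π / n := by
            field_simp
          have h3 : π * ((k:ℕ):ℝ) / n ≤ π * ((n:ℝ) - 1) / n := by gcongr
          linarith
      have h1 : Real.sin (π / n) ^ 2 ≤ Real.sin (π * (k:ℤ) / n) ^ 2 := by
        have hnn : 0 ≤ Real.sin (π / n) := by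
          apply Real.sin_nonneg_of_nonneg_of_le_pi
          · positivity
          · rw [div_le_iff₀ (by positivity)]
            nlinarith [(by exact_mod_cast hn : (2:ℝ) ≤ (n:ℝ))]
        nlinarith
      nlinarith [Complex.normSq_nonneg (dftF n y k)]
  have hsum : ∑ k : Fin n, 4 * Real.sin (π / n) ^ 2 * Complex.normSq (dftF n y k)
      ≤ ∑ k : Fin n, Complex.normSq (dftF n (fun j => y (j + 1) - y j) k) := by
    refine Finset.sum_le_sum fun k _ => ?_
    rw [hfac k]
    exact hterm k
  rw [hP2] at hsum
  have hL : ∑ k : Fin n, 4 * Real.sin (π / n) ^ 2 * Complex.normSq (dftF n y k)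
      = 4 * Real.sin (π / n) ^ 2 * ((n:ℝ) * ∑ j, Complex.normSq (y j)) := by
    rw [← Finset.mul_sum, hP1]
  rw [hL] at hsum
  have hnR : (0:ℝ) < n := by exact_mod_cast hn0
  nlinarith [hsum]

lemma norm_sq_euclid (v : EuclideanSpace ℝ (Fin 2)) : ‖v‖ ^ 2 = v 0 ^ 2 + v 1 ^ 2 := by
  rw [EuclideanSpace.norm_eq, Real.sq_sqrt (by positivity)]
  simp [Fin.sum_univ_two, sq_abs]

lemma trig_id (a b : ℝ) : (Real.cos a - Real.cos b)^2 + (Real.sin a - Real.sin b)^2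
    = 2 - 2 * Real.cos (a - b) := by
  rw [Real.cos_sub]
  nlinarith [Real.sin_sq_add_cos_sq a, Real.sin_sq_add_cos_sq b]

/-- The centered regular `n`-gon is a maximal graph realization of the `n`-cycle:
any centered realization with squared edge lengths at most 1 has total variance
at most `(n/4)·csc²(π/n)`, and the regular `n`-gon attains this bound. -/
theorem stmt_9 (n : ℕ) [NeZero n] (hn : 3 ≤ n) :
    (∀ x : Fin n → EuclideanSpace ℝ (Fin 2),
        (∑ j, x j) = 0 → (∀ j : Fin n, ‖x (j + 1) - x j‖ ^ 2 ≤ 1) →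
        ∑ j, ‖x j‖ ^ 2 ≤ ((n : ℝ) / 4) * (1 / Real.sin (π / n)) ^ 2) ∧
    (∃ x : Fin n → EuclideanSpace ℝ (Fin 2),
        (∀ (j : Fin n) (i : Fin 2), x j i =
          (2 * Real.sin (π / n))⁻¹ *
            (if i = 0 then Real.cos (2 * π * ((j : ℕ) : ℝ) / n)
             else Real.sin (2 * π * ((j : ℕ) : ℝ) / n))) ∧
        (∑ j, x j) = 0 ∧
        (∀ j : Fin n, ‖x (j + 1) - x j‖ ^ 2 ≤ 1) ∧
        ∑ j, ‖x j‖ ^ 2 = ((n : ℝ) / 4) * (1 / Real.sin (π / n)) ^ 2) := by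
  have hn0 : 0 < n := by omega
  have hpi := Real.pi_pos
  have hnR : (0:ℝ) < n := by exact_mod_cast hn0
  have hn1R : (1:ℝ) < n := by exact_mod_cast (by omega : 1 < n)
  have hs0 : 0 < Real.sin (π / n) := by
    apply Real.sin_pos_of_pos_of_lt_pi
    · positivity
    · exact div_lt_self hpi hn1R
  -- trigonometric sums over the cycle vanish
  have hkey : ((∑ j : Fin n, Real.cos (2*π*((j:ℕ):ℝ)/n) : ℝ):ℂ)
      + ((∑ j : Fin n, Real.sin (2*π*((j:ℕ):ℝ)/n) : ℝ):ℂ) * Complex.I = 0 := by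
    have h := ee_orth n hn0 1
    rw [if_neg (by intro hdvd; have := Int.le_of_dvd one_pos hdvd; omega)] at h
    have h1 : ∀ k : Fin n, ee n (1 * (k:ℤ))
        = ((Real.cos (2*π*((k:ℕ):ℝ)/n) : ℝ):ℂ) + ((Real.sin (2*π*((k:ℕ):ℝ)/n) : ℝ):ℂ) * Complex.I := by
      intro k
      rw [one_mul, ee_eq_exp]
      have harg : (2*π*((k:ℤ):ℝ)/n : ℝ) = (2*π*((k:ℕ):ℝ)/n : ℝ) := by push_cast; ring
      rw [harg, Complex.exp_mul_I, Complex.ofReal_cos, Complex.ofReal_sin]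
    calc ((∑ j : Fin n, Real.cos (2*π*((j:ℕ):ℝ)/n) : ℝ):ℂ)
        + ((∑ j : Fin n, Real.sin (2*π*((j:ℕ):ℝ)/n) : ℝ):ℂ) * Complex.I
        = ∑ j : Fin n, (((Real.cos (2*π*((j:ℕ):ℝ)/n) : ℝ):ℂ)
            + ((Real.sin (2*π*((j:ℕ):ℝ)/n) : ℝ):ℂ) * Complex.I) := by
          rw [Finset.sum_add_distrib, ← Finset.sum_mul, Complex.ofReal_sum, Complex.ofReal_sum]
      _ = ∑ j : Fin n, ee n (1 * (j:ℤ)) := Finset.sum_congr rfl fun j _ => (h1 j).symm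
      _ = 0 := h
  have hcs : (∑ j : Fin n, Real.cos (2*π*((j:ℕ):ℝ)/n) = 0)
      ∧ (∑ j : Fin n, Real.sin (2*π*((j:ℕ):ℝ)/n) = 0) := by
    rw [Complex.ext_iff] at hkey
    simpa only [Complex.add_re, Complex.add_im, Complex.ofReal_re, Complex.ofReal_im,
      Complex.mul_re, Complex.mul_im, Complex.I_re, Complex.I_im, Complex.zero_re,
      Complex.zero_im, mul_zero, mul_one, zero_mul, sub_zero, zero_sub, add_zero,
      zero_add, neg_eq_zero, neg_zero, sub_self] using hkey
  obtain ⟨hcos, hsin⟩ := hcs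
  constructor
  · -- the inequality
    intro x hsum hedge
    set y : Fin n → ℂ := fun j => (x j 0 : ℂ) + (x j 1) * Complex.I with hy
    have h0c : ∀ i, ∑ j, x j i = 0 := fun i => by
      have h : (∑ j, x j) i = (0 : EuclideanSpace ℝ (Fin 2)) i := by rw [hsum]
      rw [WithLp.ofLp_sum, Finset.sum_apply i _ _] at h
      exact h
    have h0 : ∑ j, y j = 0 := by
      simp only [hy]
      rw [Finset.sum_add_distrib, ← Finset.sum_mul,
        ← Complex.ofReal_sum, ← Complex.ofReal_sum, h0c 0, h0c 1]
      simp
    have hnormsq : ∀ j, Complex.normSq (y j) = ‖x j‖ ^ 2 := fun j => by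
      simp only [hy]
      rw [Complex.normSq_add_mul_I, norm_sq_euclid]
    have hdiff : ∀ j, Complex.normSq (y (j+1) - y j) = ‖x (j+1) - x j‖ ^ 2 := fun j => by
      have e1 : y (j+1) - y j = ((x (j+1) 0 - x j 0 : ℝ) : ℂ)
          + ((x (j+1) 1 - x j 1 : ℝ) : ℂ) * Complex.I := by
        simp only [hy]; push_cast; ring
      rw [e1, Complex.normSq_add_mul_I, norm_sq_euclid]
      simp
    have key := poincare n (by omega) y h0
    have hL : ∑ j, Complex.normSq (y j) = ∑ j, ‖x j‖ ^ 2 :=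
      Finset.sum_congr rfl fun j _ => hnormsq j
    have hR : ∑ j, Complex.normSq (y (j+1) - y j) = ∑ j, ‖x (j+1) - x j‖ ^ 2 :=
      Finset.sum_congr rfl fun j _ => hdiff j
    rw [hL, hR] at key
    have hEdge : ∑ j : Fin n, ‖x (j+1) - x j‖ ^ 2 ≤ (n:ℝ) := by
      calc ∑ j : Fin n, ‖x (j+1) - x j‖ ^ 2 ≤ ∑ _j : Fin n, (1:ℝ) :=
            Finset.sum_le_sum fun j _ => hedge j
        _ = n := by simp
    have h4s : (0:ℝ) < 4 * Real.sin (π / n) ^ 2 := by positivity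
    have hrw : ((n:ℝ)/4) * (1 / Real.sin (π / n)) ^ 2 = n / (4 * Real.sin (π / n) ^ 2) := by
      field_simp
    rw [hrw, le_div_iff₀ h4s]
    nlinarith [key, hEdge]
  · -- the witness
    set s := Real.sin (π / n) with hsdef
    set r : ℝ := (2 * s)⁻¹ with hrdef
    set x : Fin n → EuclideanSpace ℝ (Fin 2) := fun j => (WithLp.equiv 2 (Fin 2 → ℝ)).symm
      ![r * Real.cos (2*π*((j:ℕ):ℝ)/n), r * Real.sin (2*π*((j:ℕ):ℝ)/n)] with hxdef
    have c0 : ∀ j : Fin n, x j 0 = r * Real.cos (2*π*((j:ℕ):ℝ)/n) := fun j => rfl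
    have c1 : ∀ j : Fin n, x j 1 = r * Real.sin (2*π*((j:ℕ):ℝ)/n) := fun j => rfl
    refine ⟨x, ?_, ?_, ?_, ?_⟩
    · intro j i
      by_cases hi : i = 0
      · rw [hi, c0 j, if_pos rfl]
      · have hi1 : i = 1 := by omega
        rw [hi1, c1 j, if_neg (by decide)]
    · ext i
      show (∑ j, x j) i = 0
      rw [WithLp.ofLp_sum, Finset.sum_apply i _ _]
      by_cases hi : i = 0
      · subst hi
        calc ∑ j, x j 0 = ∑ j : Fin n, r * Real.cos (2*π*((j:ℕ):ℝ)/n) :=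
              Finset.sum_congr rfl fun j _ => c0 j
          _ = r * ∑ j : Fin n, Real.cos (2*π*((j:ℕ):ℝ)/n) := (Finset.mul_sum _ _ _).symm
          _ = 0 := by rw [hcos, mul_zero]
      · have hi1 : i = 1 := by omega
        subst hi1
        calc ∑ j, x j 1 = ∑ j : Fin n, r * Real.sin (2*π*((j:ℕ):ℝ)/n) :=
              Finset.sum_congr rfl fun j _ => c1 j
          _ = r * ∑ j : Fin n, Real.sin (2*π*((j:ℕ):ℝ)/n) := (Finset.mul_sum _ _ _).symm
          _ = 0 := by rw [hsin, mul_zero]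
    · intro j
      have main : ∀ A B : ℝ, Real.cos (A - B) = Real.cos (2*π/n) →
          (r * Real.cos A - r * Real.cos B)^2 + (r * Real.sin A - r * Real.sin B)^2 = 1 := by
        intro A B hAB
        have e1 : (r * Real.cos A - r * Real.cos B)^2 + (r * Real.sin A - r * Real.sin B)^2
            = r^2 * ((Real.cos A - Real.cos B)^2 + (Real.sin A - Real.sin B)^2) := by ring
        rw [e1, trig_id, hAB]
        have h3 := Real.sin_sq_eq_half_sub (π/n)
        have harg : 2*(π/n) = 2*π/n := by ring
        rw [harg] at h3
        have h2 : 2 - 2*Real.cos (2*π/n) = 4 * s^2 := by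
          rw [hsdef]; linarith
        rw [h2, hrdef]
        have hs' : s ≠ 0 := ne_of_gt hs0
        field_simp
        ring
      have hAB : Real.cos (2*π*((((j+1:Fin n)):ℕ):ℝ)/n - 2*π*((j:ℕ):ℝ)/n)
          = Real.cos (2*π/n) := by
        obtain ⟨t, ht⟩ := fin_add_one_int n j
        have htZ : (((j+1 : Fin n)):ℤ) = ((j:ℤ) + 1) + (n:ℤ)*t := by linarith [ht]
        have htR : ((((j+1 : Fin n)):ℕ):ℝ) = ((j:ℕ):ℝ) + 1 + (n:ℝ)*(t:ℝ) := by
          exact_mod_cast congrArg (Int.cast : ℤ → ℝ) htZ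
        have e2 : 2*π*((((j+1:Fin n)):ℕ):ℝ)/n - 2*π*((j:ℕ):ℝ)/n = 2*π/n + t * (2*π) := by
          rw [htR]
          field_simp
          ring
        rw [e2, Real.cos_add_int_mul_two_pi]
      have : ‖x (j+1) - x j‖ ^ 2 = 1 := by
        rw [norm_sq_euclid, PiLp.sub_apply, PiLp.sub_apply, c0, c0, c1, c1]
        exact main _ _ hAB
      rw [this]
    · have hnorm : ∀ j : Fin n, ‖x j‖ ^ 2 = r^2 := by
        intro j
        rw [norm_sq_euclid, c0, c1]
        nlinarith [Real.sin_sq_add_cos_sq (2*π*((j:ℕ):ℝ)/n)]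
      rw [Finset.sum_congr rfl (fun j _ => hnorm j), Finset.sum_const, Finset.card_univ,
        Fintype.card_fin, nsmul_eq_mul]
      have hgoal : (r:ℝ)^2 = (1/4) * (1/s)^2 := by
        rw [hrdef, mul_inv]
        ring
      rw [hgoal, hsdef]
      ring
end

section
/- Weak duality for minimal realizations: for a graph G with incidence vectors b_k, any w ∈ ℝ^m with w ≥ 0 and w^t φ = 1, and any X ∈ ℝ^{n×d} satisfying X^t 1 = 0 and ||X^t b_k||² ≥ φ_k for all edges k, one has ||X||_F² ≥ 1/λ_n(Δ_w), where λ_n(Δ_w) is the largest eigenvalue of the weighted graph Laplacian. -/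
open Finset Real

/-- Weak duality for minimal realizations: `‖X‖_F² ≥ 1/λ_n(Δ_w)` for any centered
realization with squared edge lengths at least `φ` and feasible weights `w`. -/
theorem stmt_11 (n m d : ℕ) (b : Fin m → Fin n → ℝ)
    (hb : ∀ k, ∃ i j : Fin n, i ≠ j ∧
      ∀ l, b k l = if l = i then 1 else if l = j then -1 else 0)
    (w φ : Fin m → ℝ) (hw : ∀ k, 0 ≤ w k) (hφ : ∀ k, 0 < φ k)
    (hwφ : ∑ k, w k * φ k = 1)
    (X : Fin n → Fin d → ℝ)
    (hX1 : ∀ l, ∑ i, X i l = 0)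
    (hXb : ∀ k, φ k ≤ ∑ l, (∑ i, b k i * X i l) ^ 2)
    (lam : ℝ)
    (hlam : IsGreatest {r : ℝ | ∃ v : Fin n → ℝ, ∑ i, v i ^ 2 = 1 ∧
      r = ∑ i, ∑ j, v i * (∑ k, w k * b k i * b k j) * v j} lam) :
    1 / lam ≤ ∑ i, ∑ l, X i l ^ 2 := by
  -- rewrite quadratic form
  have hform : ∀ v : Fin n → ℝ,
      ∑ i, ∑ j, v i * (∑ k, w k * b k i * b k j) * v j
      = ∑ k, w k * (∑ i, b k i * v i) ^ 2 := by
    intro v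
    have key : ∀ k, w k * (∑ i, b k i * v i) ^ 2
        = ∑ i, ∑ j, v i * (w k * b k i * b k j) * v j := by
      intro k
      rw [sq, Finset.sum_mul_sum, Finset.mul_sum]
      refine Finset.sum_congr rfl fun i _ => ?_
      rw [Finset.mul_sum]
      exact Finset.sum_congr rfl fun j _ => by ring
    calc ∑ i, ∑ j, v i * (∑ k, w k * b k i * b k j) * v j
        = ∑ i, ∑ j, ∑ k, v i * (w k * b k i * b k j) * v j := by
          refine Finset.sum_congr rfl fun i _ => Finset.sum_congr rfl fun j _ => ?_
          rw [Finset.mul_sum, Finset.sum_mul]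
      _ = ∑ i, ∑ k, ∑ j, v i * (w k * b k i * b k j) * v j :=
          Finset.sum_congr rfl fun i _ => Finset.sum_comm
      _ = ∑ k, ∑ i, ∑ j, v i * (w k * b k i * b k j) * v j := Finset.sum_comm
      _ = ∑ k, w k * (∑ i, b k i * v i) ^ 2 :=
          Finset.sum_congr rfl fun k _ => (key k).symm
  -- the eigenvalue bound for arbitrary vectors
  have hbound : ∀ v : Fin n → ℝ,
      ∑ k, w k * (∑ i, b k i * v i) ^ 2 ≤ lam * ∑ i, v i ^ 2 := by
    intro v
    rcases eq_or_lt_of_le (Finset.sum_nonneg fun i _ => sq_nonneg (v i)) with hs | hs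
    · have hv : ∀ i, v i = 0 := by
        intro i
        have := (Finset.sum_eq_zero_iff_of_nonneg (fun i _ => sq_nonneg (v i))).1 hs.symm i (mem_univ i)
        exact pow_eq_zero_iff (n := 2) (by norm_num) |>.1 this
      simp [hv, ← hs]
    · set s := ∑ i, v i ^ 2 with hsdef
      have hssq : Real.sqrt s > 0 := Real.sqrt_pos.2 hs
      set u : Fin n → ℝ := fun i => v i / Real.sqrt s with hu
      have hu1 : ∑ i, u i ^ 2 = 1 := by
        simp only [hu, div_pow, Real.sq_sqrt hs.le]
        rw [← Finset.sum_div, ← hsdef, div_self hs.ne']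
      have hmem : (∑ k, w k * (∑ i, b k i * u i) ^ 2) ≤ lam := by
        apply hlam.2
        exact ⟨u, hu1, (hform u).symm⟩
      have hscale : ∑ k, w k * (∑ i, b k i * u i) ^ 2
          = (∑ k, w k * (∑ i, b k i * v i) ^ 2) / s := by
        rw [Finset.sum_div]
        refine Finset.sum_congr rfl fun k _ => ?_
        simp only [hu]
        rw [show (∑ x, b k x * (v x / Real.sqrt s)) = (∑ x, b k x * v x) / Real.sqrt s from by
          rw [Finset.sum_div]; exact Finset.sum_congr rfl fun x _ => (mul_div_assoc _ _ _).symm,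
          div_pow, Real.sq_sqrt hs.le, mul_div_assoc]
      rw [hscale] at hmem
      calc ∑ k, w k * (∑ i, b k i * v i) ^ 2
          = (∑ k, w k * (∑ i, b k i * v i) ^ 2) / s * s := by
            field_simp
        _ ≤ lam * s := by
            exact mul_le_mul_of_nonneg_right hmem hs.le
  -- main chain
  have hmain : 1 ≤ lam * ∑ i, ∑ l, X i l ^ 2 := by
    calc 1 = ∑ k, w k * φ k := hwφ.symm
      _ ≤ ∑ k, w k * ∑ l, (∑ i, b k i * X i l) ^ 2 :=
          Finset.sum_le_sum fun k _ => mul_le_mul_of_nonneg_left (hXb k) (hw k)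
      _ = ∑ l, ∑ k, w k * (∑ i, b k i * X i l) ^ 2 := by
          simp_rw [Finset.mul_sum]; rw [Finset.sum_comm]
      _ ≤ ∑ l, lam * ∑ i, X i l ^ 2 :=
          Finset.sum_le_sum fun l _ => hbound (fun i => X i l)
      _ = lam * ∑ i, ∑ l, X i l ^ 2 := by
          rw [← Finset.mul_sum, Finset.sum_comm]
  have hF : 0 ≤ ∑ i, ∑ l, X i l ^ 2 :=
    Finset.sum_nonneg fun i _ => Finset.sum_nonneg fun l _ => sq_nonneg _
  have hlampos : 0 < lam := by
    by_contra h
    push_neg at h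
    nlinarith
  rw [div_le_iff₀ hlampos]
  nlinarith
end

section
/- The two-point realization x(i) = c ± 1/2 (with +1/2 on V₊ and −1/2 on V₋, c = −(|V₊|−|V₋|)/(2(|V₊|+|V₋|))) is a minimal graph realization of a connected (d₊,d₋)-semi-regular bipartite graph: it minimizes Σ_i x(i)² among all x : V → ℝ with Σ_i x(i) = 0 and |x(i) − x(j)|² ≥ 1 for every edge (i,j), and the minimum value is |V₊||V₋|/(|V₊|+|V₋|). -/
open Finset Real

private lemma fiber_sum {V : Type*} [Fintype V] [DecidableEq V] {m d : ℕ} (S : Finset V)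
    (e : Fin m → V) (he : ∀ k, e k ∈ S)
    (hdeg : ∀ i ∈ S, (Finset.univ.filter fun k => e k = i).card = d)
    (y : V → ℝ) : ∑ k : Fin m, y (e k) = (d : ℝ) * ∑ i ∈ S, y i := by
  rw [← Finset.sum_fiberwise_of_maps_to (fun k _ => he k) (fun k => y (e k)),
    Finset.mul_sum]
  refine Finset.sum_congr rfl fun i hi => ?_
  have : ∀ k ∈ Finset.univ.filter (fun k => e k = i), y (e k) = y i :=
    fun k hk => by rw [(Finset.mem_filter.mp hk).2]
  rw [Finset.sum_congr rfl this, Finset.sum_const, hdeg i hi, nsmul_eq_mul]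

private lemma fiber_card {V : Type*} [Fintype V] [DecidableEq V] {m d : ℕ} (S : Finset V)
    (e : Fin m → V) (he : ∀ k, e k ∈ S)
    (hdeg : ∀ i ∈ S, (Finset.univ.filter fun k => e k = i).card = d) :
    m = S.card * d := by
  have := Finset.card_eq_sum_card_fiberwise (f := fun k => e k)
    (s := Finset.univ) (t := S) (fun k _ => he k)
  rw [Finset.card_univ, Fintype.card_fin] at this
  rw [this, Finset.sum_congr rfl hdeg, Finset.sum_const, smul_eq_mul]

/-- The two-point realization is a minimal graph realization of a connected
`(d₊,d₋)`-semi-regular bipartite graph: it minimizes the total variance among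
centered realizations with squared edge lengths at least `1`, and the minimum
value is `|V₊||V₋|/(|V₊|+|V₋|)`. -/
theorem stmt_13 (V : Type*) [Fintype V] [DecidableEq V] (m dp dm : ℕ)
    (Vp : Finset V)
    (Ed : Fin m → V × V)
    (hEd : ∀ k, (Ed k).1 ∈ Vp ∧ (Ed k).2 ∉ Vp)
    (hdegp : ∀ i ∈ Vp, (Finset.univ.filter fun k => (Ed k).1 = i).card = dp)
    (hdegm : ∀ i ∉ Vp, (Finset.univ.filter fun k => (Ed k).2 = i).card = dm)
    (hconn : (SimpleGraph.fromRel (fun i j => ∃ k, Ed k = (i, j))).Connected) :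
    (∀ x : V → ℝ, ∑ i, x i = 0 →
        (∀ k, 1 ≤ (x (Ed k).1 - x (Ed k).2) ^ 2) →
        (Vp.card : ℝ) * (Vpᶜ.card : ℝ) / ((Vp.card : ℝ) + (Vpᶜ.card : ℝ))
          ≤ ∑ i, x i ^ 2) ∧
    (∃ x : V → ℝ,
        (∀ i, x i = if i ∈ Vp then
            -(((Vp.card : ℝ) - (Vpᶜ.card : ℝ)) / (2 * ((Vp.card : ℝ) + (Vpᶜ.card : ℝ)))) + 1 / 2
          else
            -(((Vp.card : ℝ) - (Vpᶜ.card : ℝ)) / (2 * ((Vp.card : ℝ) + (Vpᶜ.card : ℝ)))) - 1 / 2) ∧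
        ∑ i, x i = 0 ∧
        (∀ k, 1 ≤ (x (Ed k).1 - x (Ed k).2) ^ 2) ∧
        ∑ i, x i ^ 2
          = (Vp.card : ℝ) * (Vpᶜ.card : ℝ) / ((Vp.card : ℝ) + (Vpᶜ.card : ℝ))) := by
  set p : ℝ := (Vp.card : ℝ) with hp_def
  set q : ℝ := (Vpᶜ.card : ℝ) with hq_def
  have hp0 : 0 ≤ p := Nat.cast_nonneg _
  have hq0 : 0 ≤ q := Nat.cast_nonneg _
  have hVpos : 0 < Fintype.card V := by
    have : Nonempty V := hconn.nonempty
    exact Fintype.card_pos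
  have hpq : p + q = (Fintype.card V : ℝ) := by
    rw [hp_def, hq_def, ← Nat.cast_add, Finset.card_add_card_compl]
  have hpqpos : 0 < p + q := by rw [hpq]; exact_mod_cast hVpos
  constructor
  · -- lower bound
    intro x hx0 hxe
    rcases eq_or_lt_of_le hp0 with hp | hp
    · rw [← hp]
      simp only [zero_mul, zero_div]
      exact Finset.sum_nonneg fun i _ => sq_nonneg _
    rcases eq_or_lt_of_le hq0 with hq | hq
    · rw [← hq]
      simp only [mul_zero, zero_div]
      exact Finset.sum_nonneg fun i _ => sq_nonneg _
    -- both parts nonempty: m > 0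
    have hmpos : 0 < m := by
      by_contra hm0
      obtain ⟨i, hi⟩ := Finset.card_pos.mp (show 0 < Vp.card by rw [hp_def] at hp; exact_mod_cast hp)
      obtain ⟨j, hj⟩ := Finset.card_pos.mp (show 0 < Vpᶜ.card by rw [hq_def] at hq; exact_mod_cast hq)
      obtain ⟨w⟩ := hconn i j
      cases w with
      | nil => exact (Finset.mem_compl.mp hj) hi
      | cons h w' =>
          rcases (SimpleGraph.fromRel_adj _ _ _).mp h with ⟨-, ⟨k, -⟩ | ⟨k, -⟩⟩ <;>
            exact absurd k.isLt (by omega)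
    have hm : (0:ℝ) < (m:ℝ) := by exact_mod_cast hmpos
    set y : V → ℝ := fun i => |x i| with hy
    set s' : ℝ := ∑ i ∈ Vp, y i with hs'def
    set t' : ℝ := ∑ i ∈ Vpᶜ, y i with ht'def
    set A : ℝ := ∑ i ∈ Vp, x i ^ 2 with hAdef
    set B : ℝ := ∑ i ∈ Vpᶜ, x i ^ 2 with hBdef
    have hsplit : ∑ i, x i ^ 2 = A + B := (Finset.sum_add_sum_compl Vp _).symm
    have hedgek : ∀ k : Fin m, (1:ℝ) ≤ y (Ed k).1 + y (Ed k).2 := by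
      intro k
      have h := hxe k
      have habs := abs_sub (x (Ed k).1) (x (Ed k).2)
      have h2 := sq_abs (x (Ed k).1 - x (Ed k).2)
      nlinarith [abs_nonneg (x (Ed k).1), abs_nonneg (x (Ed k).2),
        abs_nonneg (x (Ed k).1 - x (Ed k).2)]
    have hsum1 : ∑ k : Fin m, y (Ed k).1 = (dp : ℝ) * s' :=
      fiber_sum Vp (fun k => (Ed k).1) (fun k => (hEd k).1) hdegp y
    have hsum2 : ∑ k : Fin m, y (Ed k).2 = (dm : ℝ) * t' :=
      fiber_sum Vpᶜ (fun k => (Ed k).2) (fun k => Finset.mem_compl.mpr (hEd k).2)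
        (fun i hi => hdegm i (Finset.mem_compl.mp hi)) y
    have hedge : (m:ℝ) ≤ (dp:ℝ) * s' + (dm:ℝ) * t' := by
      calc (m:ℝ) = ∑ _k : Fin m, (1:ℝ) := by simp
      _ ≤ ∑ k : Fin m, (y (Ed k).1 + y (Ed k).2) :=
          Finset.sum_le_sum fun k _ => hedgek k
      _ = (dp:ℝ) * s' + (dm:ℝ) * t' := by rw [Finset.sum_add_distrib, hsum1, hsum2]
    have hm1 : m = Vp.card * dp :=
      fiber_card Vp (fun k => (Ed k).1) (fun k => (hEd k).1) hdegp
    have hm2 : m = Vpᶜ.card * dm :=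
      fiber_card Vpᶜ (fun k => (Ed k).2) (fun k => Finset.mem_compl.mpr (hEd k).2)
        (fun i hi => hdegm i (Finset.mem_compl.mp hi))
    have hm1' : (m:ℝ) = p * (dp:ℝ) := by rw [hp_def]; exact_mod_cast hm1
    have hm2' : (m:ℝ) = q * (dm:ℝ) := by rw [hq_def]; exact_mod_cast hm2
    have hs'0 : 0 ≤ s' := Finset.sum_nonneg fun i _ => abs_nonneg _
    have ht'0 : 0 ≤ t' := Finset.sum_nonneg fun i _ => abs_nonneg _
    have hqs : p * q ≤ q * s' + p * t' := by
      have h2 := mul_le_mul_of_nonneg_left hedge (mul_pos hp hq).le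
      have h3 : p * q * ((dp:ℝ) * s' + (dm:ℝ) * t')
          = q * s' * (p * (dp:ℝ)) + p * t' * (q * (dm:ℝ)) := by ring
      rw [h3, ← hm1', ← hm2'] at h2
      have h4 : (p * q) * (m:ℝ) ≤ (q * s' + p * t') * (m:ℝ) := by linarith
      exact le_of_mul_le_mul_right h4 hm
    have hcs1 : s' ^ 2 ≤ p * A := by
      have h := sq_sum_le_card_mul_sum_sq (s := Vp) (f := y)
      have h2 : ∑ i ∈ Vp, y i ^ 2 = A := by
        rw [hAdef]; exact Finset.sum_congr rfl fun i _ => sq_abs (x i)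
      rw [h2] at h
      exact_mod_cast h
    have hcs2 : t' ^ 2 ≤ q * B := by
      have h := sq_sum_le_card_mul_sum_sq (s := Vpᶜ) (f := y)
      have h2 : ∑ i ∈ Vpᶜ, y i ^ 2 = B := by
        rw [hBdef]; exact Finset.sum_congr rfl fun i _ => sq_abs (x i)
      rw [h2] at h
      exact_mod_cast h
    rw [hsplit, div_le_iff₀ hpqpos]
    clear_value y s' t' A B
    have h6 : (p * q) ^ 2 ≤ (q * s' + p * t') ^ 2 :=
      pow_le_pow_left₀ (mul_pos hp hq).le hqs 2
    have h4 : q * s' ^ 2 ≤ q * (p * A) := mul_le_mul_of_nonneg_left hcs1 hq0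
    have h5 : p * t' ^ 2 ≤ p * (q * B) := mul_le_mul_of_nonneg_left hcs2 hp0
    have step : (q * s' ^ 2 + p * t' ^ 2) * (p + q) - (q * s' + p * t') ^ 2
        = p * q * (s' - t') ^ 2 := by ring
    have key : (p * q) * (p * q) ≤ (p * q) * ((A + B) * (p + q)) := by
      calc (p * q) * (p * q) = (p * q) ^ 2 := by ring
      _ ≤ (q * s' + p * t') ^ 2 := h6
      _ ≤ (q * s' ^ 2 + p * t' ^ 2) * (p + q) := by
          have h7 := mul_nonneg (mul_nonneg hp0 hq0) (sq_nonneg (s' - t'))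
          linarith [step]
      _ ≤ (q * (p * A) + p * (q * B)) * (p + q) :=
          mul_le_mul_of_nonneg_right (add_le_add h4 h5) hpqpos.le
      _ = (p * q) * ((A + B) * (p + q)) := by ring
    exact le_of_mul_le_mul_left key (mul_pos hp hq)
  · -- existence
    set c : ℝ := -((p - q) / (2 * (p + q))) with hc
    refine ⟨fun i => if i ∈ Vp then c + 1/2 else c - 1/2, fun i => rfl, ?_, ?_, ?_⟩
    · rw [← Finset.sum_add_sum_compl Vp]
      have h1 : ∑ i ∈ Vp, (if i ∈ Vp then c + 1/2 else c - 1/2) = p * (c + 1/2) := by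
        rw [Finset.sum_congr rfl fun i hi => if_pos hi, Finset.sum_const, nsmul_eq_mul]
      have h2 : ∑ i ∈ Vpᶜ, (if i ∈ Vp then c + 1/2 else c - 1/2) = q * (c - 1/2) := by
        rw [Finset.sum_congr rfl fun i hi => if_neg (Finset.mem_compl.mp hi),
          Finset.sum_const, nsmul_eq_mul]
      rw [h1, h2, hc]
      field_simp
      ring
    · intro k
      simp only [if_pos (hEd k).1, if_neg (hEd k).2]
      norm_num
    · rw [← Finset.sum_add_sum_compl Vp]
      have h1 : ∑ i ∈ Vp, (if i ∈ Vp then c + 1/2 else c - 1/2) ^ 2 = p * (c + 1/2) ^ 2 := by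
        rw [Finset.sum_congr rfl fun i hi => by rw [if_pos hi], Finset.sum_const, nsmul_eq_mul]
      have h2 : ∑ i ∈ Vpᶜ, (if i ∈ Vp then c + 1/2 else c - 1/2) ^ 2 = q * (c - 1/2) ^ 2 := by
        rw [Finset.sum_congr rfl fun i hi => by rw [if_neg (Finset.mem_compl.mp hi)],
          Finset.sum_const, nsmul_eq_mul]
      rw [h1, h2, hc]
      field_simp
      ring
end

section
/- If Y ∈ ℝ^{n×n} is symmetric positive semidefinite with Y·1 = 0, A is symmetric positive semidefinite with A·1 = 0 and second-smallest eigenvalue λ (i.e., v^t A v ≥ λ||v||² for all v ⟂ 1), and ⟨A, Y⟩_F = λ·tr(JY) where J = I − 11^t/n, then every eigenvector of Y with nonzero eigenvalue lies in the λ-eigenspace of A. -/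
open Finset Real Matrix

private lemma aux_tr_zero {n : ℕ} (M : Matrix (Fin n) (Fin n) ℝ)
    (h : Matrix.trace (Mᵀ * M) = 0) : M = 0 := by
  have h' : ∑ j, ∑ i, (M i j) ^ 2 = 0 := by
    rw [← h]
    simp [Matrix.trace, Matrix.mul_apply, Matrix.diag, sq]
  have hz : ∀ j ∈ Finset.univ, ∑ i, (M i j) ^ 2 = 0 := by
    intro j _
    have := Finset.sum_eq_zero_iff_of_nonneg (fun j _ => Finset.sum_nonneg
      (fun i _ => sq_nonneg (M i j))) |>.mp h'
    exact this j (Finset.mem_univ j)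
  ext i j
  have := Finset.sum_eq_zero_iff_of_nonneg (fun i _ => sq_nonneg (M i j)) |>.mp
    (hz j (Finset.mem_univ j)) i (Finset.mem_univ i)
  simpa using pow_eq_zero_iff (n := 2) (by norm_num) |>.mp this

open scoped MatrixOrder in
private lemma aux_mul_zero {n : ℕ} {B Y : Matrix (Fin n) (Fin n) ℝ}
    (hB : B.PosSemidef) (hY : Y.PosSemidef)
    (h : Matrix.trace (B * Y) = 0) : B * Y = 0 := by
  set SB := CFC.sqrt B with hSB
  set SY := CFC.sqrt Y with hSY
  have hBs : SB * SB = B := CFC.sqrt_mul_sqrt_self B hB.nonneg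
  have hYs : SY * SY = Y := CFC.sqrt_mul_sqrt_self Y hY.nonneg
  have hSBt : SBᵀ = SB := by
    have := (CFC.sqrt_nonneg B).posSemidef.isHermitian
    simpa [Matrix.IsHermitian, Matrix.conjTranspose_eq_transpose_of_trivial] using this
  have hSYt : SYᵀ = SY := by
    have := (CFC.sqrt_nonneg Y).posSemidef.isHermitian
    simpa [Matrix.IsHermitian, Matrix.conjTranspose_eq_transpose_of_trivial] using this
  have key : (SB * SY)ᵀ * (SB * SY) = SY * (B * SY) := by
    rw [Matrix.transpose_mul, hSBt, hSYt, ← hBs]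
    noncomm_ring
  have htr0 : Matrix.trace ((SB * SY)ᵀ * (SB * SY)) = 0 := by
    rw [key, Matrix.trace_mul_comm, Matrix.mul_assoc, hYs, h]
  have hM : SB * SY = 0 := aux_tr_zero _ htr0
  calc B * Y = SB * (SB * SY) * SY := by rw [← hBs, ← hYs]; noncomm_ring
    _ = 0 := by rw [hM]; simp

/-- If `Y` is PSD with `Y·1 = 0`, `A` is PSD with `A·1 = 0`, `λ` lower-bounds the
Rayleigh quotient of `A` on `1⊥`, and `⟨A,Y⟩_F = λ·tr(JY)`, then every eigenvector
of `Y` with nonzero eigenvalue is a `λ`-eigenvector of `A`. -/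
theorem stmt_14 (n : ℕ) (Y A : Matrix (Fin n) (Fin n) ℝ)
    (hY : Y.PosSemidef) (hY1 : Y *ᵥ (fun _ => (1 : ℝ)) = 0)
    (hA : A.PosSemidef) (hA1 : A *ᵥ (fun _ => (1 : ℝ)) = 0)
    (lam : ℝ)
    (hlam : ∀ v : Fin n → ℝ, ∑ i, v i = 0 →
      lam * ∑ i, v i ^ 2 ≤ ∑ i, ∑ j, v i * A i j * v j)
    (J : Matrix (Fin n) (Fin n) ℝ)
    (hJ : J = 1 - (n : ℝ)⁻¹ • Matrix.of (fun _ _ => (1 : ℝ)))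
    (htr : Matrix.trace (Aᵀ * Y) = lam * Matrix.trace (J * Y)) :
    ∀ (v : Fin n → ℝ) (μ : ℝ), μ ≠ 0 → Y *ᵥ v = μ • v → A *ᵥ v = lam • v := by
  rcases Nat.eq_zero_or_pos n with h0 | hpos
  · subst h0
    exact fun v μ _ _ => funext fun i => i.elim0
  have hn : (n : ℝ) ≠ 0 := Nat.cast_ne_zero.mpr (by omega)
  have hAt : Aᵀ = A := by
    ext i j
    have := congrFun (congrFun hA.isHermitian.eq i) j
    simpa using this
  have hYt : Yᵀ = Y := by
    ext i j
    have := congrFun (congrFun hY.isHermitian.eq i) j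
    simpa using this
  have hJt : Jᵀ = J := by
    rw [hJ]
    ext i j
    by_cases h : i = j <;> simp [Matrix.one_apply, h] <;> simp [Ne.symm h]
  have hJmul : ∀ x : Fin n → ℝ, J *ᵥ x = fun i => x i - (∑ k, x k) / n := by
    intro x
    funext i
    rw [hJ]
    simp [Matrix.sub_mulVec, Matrix.mulVec, dotProduct, div_eq_inv_mul,
      Matrix.one_apply, Finset.mul_sum, sub_mul, Finset.sum_sub_distrib, ite_mul]
  set B : Matrix (Fin n) (Fin n) ℝ := A - lam • J with hB
  have hBt : Bᵀ = B := by rw [hB, Matrix.transpose_sub, Matrix.transpose_smul, hAt, hJt]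
  have hA1' : ∀ w : Fin n → ℝ, (fun _ => (1:ℝ)) ⬝ᵥ (A *ᵥ w) = 0 := by
    intro w
    rw [Matrix.dotProduct_mulVec, ← Matrix.mulVec_transpose, hAt, hA1]
    simp [dotProduct]
  have hBpsd : B.PosSemidef := by
    refine PosSemidef.of_dotProduct_mulVec_nonneg ?_ ?_
    · show Bᴴ = B
      ext i j
      have := congrFun (congrFun hBt i) j
      simpa using this
    · intro x
      have hsx : (star x) = x := by funext i; simp
      rw [hsx]
      set s : ℝ := ∑ k, x k with hs
      set w : Fin n → ℝ := fun i => x i - s / n with hw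
      have hws : ∑ i, w i = 0 := by
        simp only [hw, Finset.sum_sub_distrib, Finset.sum_const, Finset.card_univ,
          Fintype.card_fin, nsmul_eq_mul]
        field_simp [hs]
        rw [hs, sub_self]
      have hxw : x = w + (s / n) • (fun _ => (1:ℝ)) := by
        funext i; simp [hw]
      have hAx : A *ᵥ x = A *ᵥ w := by
        rw [hxw, Matrix.mulVec_add, Matrix.mulVec_smul, hA1]
        simp
      have hxAx : x ⬝ᵥ (A *ᵥ x) = w ⬝ᵥ (A *ᵥ w) + (s / n) * ((fun _ => (1:ℝ)) ⬝ᵥ (A *ᵥ w)) := by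
        rw [hAx]
        conv_lhs => rw [hxw]
        rw [add_dotProduct, smul_dotProduct]
        simp
      have hJx : x ⬝ᵥ (J *ᵥ x) = ∑ i, w i ^ 2 := by
        rw [hJmul x]
        show x ⬝ᵥ w = _
        calc x ⬝ᵥ w = ∑ i, x i * w i := rfl
          _ = ∑ i, (w i + s / n) * w i := by
              congr 1; funext i; congr 1; simp [hw]
          _ = ∑ i, w i ^ 2 + (s / n) * ∑ i, w i := by
              rw [Finset.mul_sum, ← Finset.sum_add_distrib]; congr 1; funext i; ring
          _ = ∑ i, w i ^ 2 := by rw [hws]; ring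
      have hlw := hlam w hws
      have hwAw : ∑ i, ∑ j, w i * A i j * w j = w ⬝ᵥ (A *ᵥ w) := by
        simp [dotProduct, Matrix.mulVec, Finset.mul_sum, mul_assoc]
      rw [hwAw] at hlw
      have hq : x ⬝ᵥ (B *ᵥ x) = w ⬝ᵥ (A *ᵥ w) - lam * ∑ i, w i ^ 2 := by
        rw [hB, Matrix.sub_mulVec, dotProduct_sub, Matrix.smul_mulVec,
          dotProduct_smul, smul_eq_mul, hxAx, hA1' w, hJx]
        ring
      rw [hq]
      linarith
  have htrB : Matrix.trace (B * Y) = 0 := by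
    have h1 : Matrix.trace (B * Y)
        = Matrix.trace (Aᵀ * Y) - lam * Matrix.trace (J * Y) := by
      rw [hB, Matrix.sub_mul, Matrix.trace_sub, Matrix.smul_mul, Matrix.trace_smul, hAt,
        smul_eq_mul]
    rw [h1, htr, sub_self]
  have hBY : B * Y = 0 := aux_mul_zero hBpsd hY htrB
  intro v μ hμ hv
  have hsum : ∑ i, v i = 0 := by
    have h1 : (fun _ => (1:ℝ)) ⬝ᵥ (Y *ᵥ v) = 0 := by
      rw [Matrix.dotProduct_mulVec, ← Matrix.mulVec_transpose, hYt, hY1]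
      simp [dotProduct]
    rw [hv] at h1
    have h2 : μ * ∑ i, v i = 0 := by
      simpa [dotProduct, Finset.mul_sum] using h1
    exact (mul_eq_zero.mp h2).resolve_left hμ
  have hBv : B *ᵥ v = 0 := by
    have h0 : B *ᵥ (Y *ᵥ v) = 0 := by
      rw [Matrix.mulVec_mulVec, hBY]; simp
    rw [hv, Matrix.mulVec_smul] at h0
    exact (smul_eq_zero.mp h0).resolve_left hμ
  have hJv : J *ᵥ v = v := by
    rw [hJmul v, hsum]
    funext i; simp
  have hfin : A *ᵥ v - lam • v = 0 := by
    rw [hB, Matrix.sub_mulVec, Matrix.smul_mulVec, hJv] at hBv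
    exact hBv
  exact sub_eq_zero.mp hfin
end
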